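/- Define operators A_n(ρ, ε) = −ρ·Q_n(u) + ε·(∂ + ρu)^n, where Q_n(u) = (∂+u)^n(1), ρ and ε are constants, and the first summand acts as multiplication by the function −ρQ_n(u). Then the formal adjoint satisfies −A_n(ρ, ε)† = A_n(−ρ, (−1)^{n+1} ε). -/
import Mathlib


/-- **Self-duality of the Burgers extension family.**  In a ring `A` of differential
operators over a commutative differential ring `(R, d)` — with `M : R →+* A` the
multiplication operators, `D` the operator `∂` satisfying `D·M(f) = M(f)·D + M(d f)`,
and `adj` the formal adjoint (additive, anti-multiplicative, `adj D = −D`,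
`adj (M f) = M f`) — set `A_n(ρ, ε) = −ρ·Q_n(u) + ε·(∂ + ρu)^n`, where
`Q_n(u) = (∂+u)^n(1)` and `ε` is a constant (`d ε = 0`).  Then
`−A_n(ρ, ε)† = A_n(−ρ, (−1)^{n+1} ε)`. -/
theorem stmt8 {R A : Type*} [CommRing R] [Ring A]
    (d : R →+ R)
    (hleib : ∀ a b : R, d (a * b) = d a * b + a * d b)
    (M : R →+* A) (D : A)
    (hcomm : ∀ f : R, D * M f = M f * D + M (d f))
    (adj : A →+ A)
    (hanti : ∀ a b : A, adj (a * b) = adj b * adj a)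
    (hadjD : adj D = -D) (hadjM : ∀ f : R, adj (M f) = M f)
    (u ρ ε : R) (hε : d ε = 0)
    (Q : R → ℕ → R) (hQ0 : ∀ w, Q w 0 = 1)
    (hQs : ∀ w k, Q w (k + 1) = d (Q w k) + w * Q w k)
    (n : ℕ) :
    -adj (M (-(ρ * Q u n)) + M ε * (D + M (ρ * u)) ^ n)
      = M (-(-ρ * Q u n)) + M ((-1) ^ (n + 1) * ε) * (D + M (-ρ * u)) ^ n := by
  -- adj of the main operator
  set X := D + M (ρ * u) with hX
  set Y := D + M (-ρ * u) with hY
  have hadjX : adj X = -Y := by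
    rw [hX, map_add, hadjD, hadjM, hY, neg_mul, map_neg]
    abel
  -- Mε commutes with Y
  have hMD : Commute (M ε) D := by
    have h := hcomm ε
    rw [hε, map_zero, add_zero] at h
    exact h.symm
  have hMY : Commute (M ε) Y := by
    refine hMD.add_right ?_
    show M ε * M (-ρ * u) = M (-ρ * u) * M ε
    rw [← map_mul, ← map_mul, mul_comm]
  -- key lemma: adj (Mε * X^k) = (adj X)^k * Mε
  have key : ∀ k : ℕ, adj (M ε * X ^ k) = (adj X) ^ k * M ε := by
    intro k
    induction k with
    | zero => simp [hadjM]
    | succ k ih =>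
      rw [pow_succ, ← mul_assoc, hanti, ih, ← mul_assoc, ← pow_succ']
  rw [map_add, key, hadjX, hadjM, neg_pow]
  have hM1 : M ((-1 : R) ^ (n + 1) * ε) = (-1 : A) ^ (n + 1) * M ε := by
    rw [map_mul, map_pow, map_neg, map_one]
  rw [hM1]
  have hcommYn : Y ^ n * M ε = M ε * Y ^ n := ((hMY.pow_right n).symm).eq
  rw [pow_succ]
  simp only [map_neg, neg_neg, mul_assoc]
  rw [hcommYn]
  simp only [map_neg, neg_neg, neg_add, neg_mul, mul_neg, one_mul]
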